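/- Stuttering lemma for the full epistemic language: for all call sequences σ₁, σ₂, calls c, and formulas φ of the language L (built from F_a S, negation, conjunction, and K_a), σ₁.c.σ₂ ⊨ φ iff σ₁.c.c.σ₂ ⊨ φ. -/

import Mathlib

/-- A call is an ordered pair of distinct agents (caller, callee). -/
def Call (n : ℕ) : Type := {p : Fin n × Fin n // p.1 ≠ p.2}

namespace Gossip

variable {n : ℕ}

/-- The caller of a call. -/
def caller (c : Call n) : Fin n := c.1.1

/-- The callee of a call. -/
def callee (c : Call n) : Fin n := c.1.2

/-- Agent `a` is involved in call `c`. -/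
def involves (c : Call n) (a : Fin n) : Prop := a = caller c ∨ a = callee c

/-- A gossip situation assigns to each agent the set of secrets it is familiar with;
secrets are identified with the agents holding them. -/
def Situation (n : ℕ) := Fin n → Finset (Fin n)

/-- The initial gossip situation: every agent only holds its own secret. -/
def root : Situation n := fun a => {a}

/-- The effect of a call on a gossip situation: caller and callee share their secrets. -/
def applyCall (c : Call n) (s : Situation n) : Situation n :=
  fun x => if x = caller c ∨ x = callee c then s (caller c) ∪ s (callee c) else s x

/-- The effect of a call sequence on a gossip situation. -/
def applySeq (σ : List (Call n)) (s : Situation n) : Situation n :=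
  σ.foldl (fun t c => applyCall c t) s

end Gossip

open Gossip

namespace Gossip

/-- The indistinguishability relation `∼ₐ`: the smallest equivalence relation on call
sequences such that calls not involving `a` can be appended on either side, and a call
involving `a` can be appended on both sides provided `a` observes the same secrets. -/
inductive Indist {n : ℕ} (a : Fin n) : List (Call n) → List (Call n) → Prop where
  | refl (σ : List (Call n)) : Indist a σ σ
  | symm {σ τ : List (Call n)} : Indist a σ τ → Indist a τ σ
  | trans {σ τ υ : List (Call n)} : Indist a σ τ → Indist a τ υ → Indist a σ υ
  | skip_left {σ τ : List (Call n)} {c : Call n} :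
      Indist a σ τ → ¬ involves c a → Indist a (σ ++ [c]) τ
  | skip_right {σ τ : List (Call n)} {c : Call n} :
      Indist a σ τ → ¬ involves c a → Indist a σ (τ ++ [c])
  | call {σ τ : List (Call n)} {c : Call n} :
      Indist a σ τ → involves c a →
      applySeq (σ ++ [c]) root a = applySeq (τ ++ [c]) root a →
      Indist a (σ ++ [c]) (τ ++ [c])

/-- Formulas of the language `L`: atomic formulas `F_a S`, negation, conjunction and
the knowledge modalities `K_a`. -/
inductive Form (n : ℕ) : Type where
  | F : Fin n → Fin n → Form n
  | neg : Form n → Form n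
  | and : Form n → Form n → Form n
  | K : Fin n → Form n → Form n

/-- Truth of a formula after a call sequence. -/
def sat {n : ℕ} : List (Call n) → Form n → Prop
  | σ, .F a S => S ∈ applySeq σ root a
  | σ, .neg φ => ¬ sat σ φ
  | σ, .and φ ψ => sat σ φ ∧ sat σ ψ
  | σ, .K a φ => ∀ τ, Indist a σ τ → sat τ φ

end Gossip

namespace Gossip

variable {n : ℕ}

lemma inv_caller (c : Call n) : involves c (caller c) := Or.inl rfl
lemma inv_callee (c : Call n) : involves c (callee c) := Or.inr rfl

instance instDecInv (c : Call n) (x : Fin n) : Decidable (involves c x) := by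
  unfold involves; infer_instance

lemma applyCall_pos {c : Call n} {x : Fin n} (s : Situation n) (h : involves c x) :
    applyCall c s x = s (caller c) ∪ s (callee c) := by
  unfold applyCall; exact if_pos h

lemma applyCall_neg {c : Call n} {x : Fin n} (s : Situation n) (h : ¬ involves c x) :
    applyCall c s x = s x := by
  unfold applyCall; exact if_neg h

lemma applyCall_merge (c : Call n) (s : Situation n) :
    applyCall c s (caller c) = applyCall c s (callee c) := by
  rw [applyCall_pos s (inv_caller c), applyCall_pos s (inv_callee c)]

lemma subset_applyCall (c : Call n) (s : Situation n) (x : Fin n) :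
    s x ⊆ applyCall c s x := by
  by_cases h : involves c x
  · rw [applyCall_pos s h]
    rcases h with h | h
    · rw [h]; exact Finset.subset_union_left
    · rw [h]; exact Finset.subset_union_right
  · rw [applyCall_neg s h]

@[simp] lemma applySeq_nil (s : Situation n) : applySeq [] s = s := rfl

@[simp] lemma applySeq_cons (c : Call n) (σ : List (Call n)) (s : Situation n) :
    applySeq (c :: σ) s = applySeq σ (applyCall c s) := rfl

lemma applySeq_append (σ τ : List (Call n)) (s : Situation n) :
    applySeq (σ ++ τ) s = applySeq τ (applySeq σ s) := by
  unfold applySeq; rw [List.foldl_append]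

lemma subset_applySeq (σ : List (Call n)) (s : Situation n) (x : Fin n) :
    s x ⊆ applySeq σ s x := by
  induction σ generalizing s with
  | nil => simp
  | cons c σ ih =>
      rw [applySeq_cons]
      exact (subset_applyCall c s x).trans (ih (applyCall c s))

lemma applyCall_noop {c : Call n} {s : Situation n} (h : s (caller c) = s (callee c)) :
    applyCall c s = s := by
  funext z
  by_cases hz : involves c z
  · rw [applyCall_pos s hz, h, Finset.union_self]
    rcases hz with hz | hz <;> rw [hz]
    exact h.symm
  · exact applyCall_neg s hz

end Gossip
namespace Gossip

variable {n : ℕ}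

/-- The view of agent x: the list of calls involving x together with x's set of
secrets right after each such call. -/
def view (s : Situation n) : List (Call n) → Fin n → List (Call n × Finset (Fin n))
  | [], _ => []
  | c :: σ, x =>
      if involves c x then (c, applyCall c s x) :: view (applyCall c s) σ x
      else view (applyCall c s) σ x

@[simp] lemma view_nil (s : Situation n) (x : Fin n) : view s [] x = [] := rfl

lemma view_cons_pos {c : Call n} {x : Fin n} (s : Situation n) (σ : List (Call n))
    (h : involves c x) :
    view s (c :: σ) x = (c, applyCall c s x) :: view (applyCall c s) σ x := by
  rw [view, if_pos h]

lemma view_cons_neg {c : Call n} {x : Fin n} (s : Situation n) (σ : List (Call n))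
    (h : ¬ involves c x) :
    view s (c :: σ) x = view (applyCall c s) σ x := by
  rw [view, if_neg h]

lemma view_append (σ τ : List (Call n)) (s : Situation n) (x : Fin n) :
    view s (σ ++ τ) x = view s σ x ++ view (applySeq σ s) τ x := by
  induction σ generalizing s with
  | nil => simp
  | cons c σ ih =>
      by_cases h : involves c x
      · rw [List.cons_append, view_cons_pos _ _ h, view_cons_pos _ _ h, ih, applySeq_cons,
          List.cons_append]
      · rw [List.cons_append, view_cons_neg _ _ h, view_cons_neg _ _ h, ih, applySeq_cons]

lemma view_singleton_pos {c : Call n} {x : Fin n} (s : Situation n) (h : involves c x) :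
    view s [c] x = [(c, applyCall c s x)] := by
  rw [view_cons_pos _ _ h, view_nil]

lemma view_singleton_neg {c : Call n} {x : Fin n} (s : Situation n) (h : ¬ involves c x) :
    view s [c] x = [] := by
  rw [view_cons_neg _ _ h, view_nil]

/-- The final set of x is determined by its view (and the initial set). -/
lemma applySeq_eq_foldl_view (σ : List (Call n)) (s : Situation n) (x : Fin n) :
    applySeq σ s x = (view s σ x).foldl (fun _ e => e.2) (s x) := by
  induction σ generalizing s with
  | nil => simp
  | cons c σ ih =>
      by_cases h : involves c x
      · rw [applySeq_cons, view_cons_pos _ _ h, List.foldl_cons, ih]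
      · rw [applySeq_cons, view_cons_neg _ _ h, ih, applyCall_neg s h]

lemma view_eq_nil_of_not_involves {σ : List (Call n)} {x : Fin n}
    (h : ∀ c ∈ σ, ¬ involves c x) (s : Situation n) : view s σ x = [] := by
  induction σ generalizing s with
  | nil => rfl
  | cons c σ ih =>
      rw [view_cons_neg _ _ (h c List.mem_cons_self)]
      exact ih (fun d hd => h d (List.mem_cons_of_mem c hd)) _

end Gossip
namespace Gossip

variable {n : ℕ}

lemma applySeq_concat (σ : List (Call n)) (c : Call n) (s : Situation n) :
    applySeq (σ ++ [c]) s = applyCall c (applySeq σ s) := by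
  rw [applySeq_append]; rfl

lemma view_concat_pos {c : Call n} {x : Fin n} (σ : List (Call n)) (s : Situation n)
    (h : involves c x) :
    view s (σ ++ [c]) x = view s σ x ++ [(c, applyCall c (applySeq σ s) x)] := by
  rw [view_append, view_singleton_pos _ h]

lemma view_concat_neg {c : Call n} {x : Fin n} (σ : List (Call n)) (s : Situation n)
    (h : ¬ involves c x) :
    view s (σ ++ [c]) x = view s σ x := by
  rw [view_append, view_singleton_neg _ h, List.append_nil]

lemma view_of_indist {x : Fin n} {σ τ : List (Call n)} (h : Indist x σ τ) :
    view root σ x = view root τ x := by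
  induction h with
  | refl σ => rfl
  | symm _ ih => exact ih.symm
  | trans _ _ ih₁ ih₂ => exact ih₁.trans ih₂
  | @skip_left σ τ c _ hc ih => rw [view_concat_neg _ _ hc]; exact ih
  | @skip_right σ τ c _ hc ih => rw [view_concat_neg _ _ hc]; exact ih
  | @call σ τ c _ hc hval ih =>
      rw [view_concat_pos _ _ hc, view_concat_pos _ _ hc, ih]
      rw [applySeq_concat] at hval
      rw [applySeq_concat] at hval
      rw [hval]

lemma indist_of_view {x : Fin n} :
    ∀ (N : ℕ) (σ τ : List (Call n)), σ.length + τ.length ≤ N →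
      view root σ x = view root τ x → Indist x σ τ := by
  intro N
  induction N with
  | zero =>
      intro σ τ hlen _
      have hσ : σ = [] := List.eq_nil_of_length_eq_zero (by omega)
      have hτ : τ = [] := List.eq_nil_of_length_eq_zero (by omega)
      subst hσ; subst hτ; exact Indist.refl []
  | succ N ih =>
      intro σ τ hlen hv
      rcases List.eq_nil_or_concat σ with hσ | ⟨σ', c, rfl⟩
      case inr =>
        simp only [List.concat_eq_append] at hlen hv ⊢
        by_cases hc : involves c x
        case neg =>
          rw [view_concat_neg _ _ hc] at hv
          refine Indist.skip_left (ih _ _ ?_ hv) hc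
          simp at hlen ⊢; omega
        case pos =>
          rcases List.eq_nil_or_concat τ with hτ | ⟨τ', d, rfl⟩
          case inl =>
            exfalso
            subst hτ
            rw [view_concat_pos _ _ hc] at hv
            simp at hv
          case inr =>
            simp only [List.concat_eq_append] at hlen hv ⊢
            by_cases hd : involves d x
            case neg =>
              rw [view_concat_neg _ _ hd] at hv
              refine Indist.skip_right (ih _ _ ?_ hv) hd
              simp at hlen ⊢; omega
            case pos =>
              rw [view_concat_pos _ _ hc, view_concat_pos _ _ hd] at hv
              have hinit : view root σ' x = view root τ' x :=
                List.append_inj_left' hv (by simp)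
              have hlast : (c, applyCall c (applySeq σ' root) x)
                  = (d, applyCall d (applySeq τ' root) x) := by
                have h2 := List.append_inj_right' hv (by simp)
                simpa using h2
              have hcd : c = d := congrArg Prod.fst hlast
              have hval : applyCall c (applySeq σ' root) x
                  = applyCall d (applySeq τ' root) x := congrArg Prod.snd hlast
              subst hcd
              refine Indist.call (ih _ _ ?_ hinit) hc ?_
              · simp at hlen ⊢; omega
              · rw [applySeq_concat, applySeq_concat]; exact hval
      case inl =>
        subst hσ
        rcases List.eq_nil_or_concat τ with hτ | ⟨τ', d, rfl⟩
        · subst hτ; exact Indist.refl []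
        · simp only [List.concat_eq_append] at hlen hv ⊢
          by_cases hd : involves d x
          · exfalso
            rw [view_concat_pos _ _ hd] at hv
            simp at hv
          · rw [view_concat_neg _ _ hd] at hv
            refine Indist.skip_right (ih [] τ' ?_ hv) hd
            simp at hlen ⊢; omega

theorem indist_iff_view {x : Fin n} {σ τ : List (Call n)} :
    Indist x σ τ ↔ view root σ x = view root τ x :=
  ⟨view_of_indist, fun h => indist_of_view (σ.length + τ.length) σ τ le_rfl h⟩

lemma sat_K_iff (x : Fin n) (σ : List (Call n)) (φ : Form n) :
    sat σ (.K x φ) ↔ ∀ τ, view root τ x = view root σ x → sat τ φ := by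
  show (∀ τ, Indist x σ τ → sat τ φ) ↔ _
  constructor
  · intro h τ hτ
    exact h τ (indist_iff_view.2 hτ.symm)
  · intro h τ hτ
    exact h τ (indist_iff_view.1 hτ).symm

end Gossip
namespace Gossip

variable {n : ℕ}

/-- If two sequences give every agent the same view, they satisfy the same formulas. -/
lemma sat_congr_view {σ σ' : List (Call n)} (h : ∀ z, view root σ z = view root σ' z) :
    ∀ φ : Form n, sat σ φ ↔ sat σ' φ := by
  intro φ
  induction φ generalizing σ σ' with
  | F a S =>
      show S ∈ applySeq σ root a ↔ S ∈ applySeq σ' root a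
      rw [applySeq_eq_foldl_view, applySeq_eq_foldl_view, h a]
  | neg φ ih => exact not_congr (ih h)
  | and φ ψ ihφ ihψ => exact and_congr (ihφ h) (ihψ h)
  | K a φ ih =>
      rw [sat_K_iff, sat_K_iff]
      constructor
      · intro hs τ hτ; exact hs τ (hτ.trans (h a).symm)
      · intro hs τ hτ; exact hs τ (hτ.trans (h a))

/-- Values of x's entries equal x's set right after the corresponding call. -/
lemma const_of_values {x : Fin n} {X : Finset (Fin n)} :
    ∀ (ρ : List (Call n)) (s : Situation n), s x = X →
      (∀ e ∈ view s ρ x, e.2 = X) →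
      ∀ p q : List (Call n), ρ = p ++ q → applySeq p s x = X := by
  intro ρ
  induction ρ with
  | nil =>
      intro s hs _ p q hpq
      obtain ⟨rfl, rfl⟩ : p = [] ∧ q = [] := by
        constructor <;> [exact List.eq_nil_of_length_eq_zero (by
          have := congrArg List.length hpq; simp at this; omega);
          exact List.eq_nil_of_length_eq_zero (by
          have := congrArg List.length hpq; simp at this; omega)]
      simpa using hs
  | cons d ρ ih =>
      intro s hs hv p q hpq
      rcases p with _ | ⟨d', p'⟩
      · simpa using hs
      · rw [List.cons_append] at hpq
        injection hpq with h1 hρ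
        subst h1
        have hnext : applyCall d s x = X := by
          by_cases hdx : involves d x
          · exact hv (d, applyCall d s x) (by rw [view_cons_pos _ _ hdx]; simp)
          · rw [applyCall_neg s hdx]; exact hs
        have hv' : ∀ e ∈ view (applyCall d s) ρ x, e.2 = X := by
          intro e he
          apply hv
          by_cases hdx : involves d x
          · rw [view_cons_pos _ _ hdx]; exact List.mem_cons_of_mem _ he
          · rw [view_cons_neg _ _ hdx]; exact he
        rw [applySeq_cons]
        exact ih (applyCall d s) hnext hv' p' q hρ

/-- Conversely: if x's set is constantly X along ρ then all entry values are X. -/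
lemma values_of_const {x : Fin n} {X : Finset (Fin n)} :
    ∀ (ρ : List (Call n)) (s : Situation n),
      (∀ p q : List (Call n), ρ = p ++ q → applySeq p s x = X) →
      ∀ e ∈ view s ρ x, e.2 = X := by
  intro ρ
  induction ρ with
  | nil => intro s _ e he; simp at he
  | cons d ρ ih =>
      intro s hc e he
      have hnext : applyCall d s x = X := by
        have := hc [d] ρ rfl
        simpa using this
      by_cases hdx : involves d x
      · rw [view_cons_pos _ _ hdx] at he
        rcases List.mem_cons.1 he with rfl | he
        · exact hnext
        · refine ih (applyCall d s) ?_ e he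
          intro p q hpq
          have := hc (d :: p) q (by simp [hpq])
          simpa using this
      · rw [view_cons_neg _ _ hdx] at he
        refine ih (applyCall d s) ?_ e he
        intro p q hpq
        have := hc (d :: p) q (by simp [hpq])
        simpa using this

lemma applySeq_prefix_subset {ρ p q : List (Call n)} (h : ρ = p ++ q) (s : Situation n)
    (x : Fin n) : applySeq p s x ⊆ applySeq ρ s x := by
  subst h
  rw [applySeq_append]
  exact subset_applySeq q (applySeq p s) x

/-- If x starts at X and ends inside X, it is constantly X. -/
lemma const_of_ub {x : Fin n} {X : Finset (Fin n)} {ρ : List (Call n)} {s : Situation n}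
    (hs : s x = X) (hub : applySeq ρ s x ⊆ X) :
    ∀ p q : List (Call n), ρ = p ++ q → applySeq p s x = X := by
  intro p q hpq
  refine Finset.Subset.antisymm ((applySeq_prefix_subset hpq s x).trans hub) ?_
  rw [← hs]
  exact subset_applySeq p s x

end Gossip
namespace Gossip

variable {n : ℕ}

/-- A call is "good" (w.r.t. threshold X) if both participants know at most X. -/
def good (X : Finset (Fin n)) (t : Situation n) (r : Call n) : Prop :=
  t (caller r) ⊆ X ∧ t (callee r) ⊆ X

instance (X : Finset (Fin n)) (t : Situation n) (r : Call n) : Decidable (good X t r) := by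
  unfold good; infer_instance

def allGood (X : Finset (Fin n)) : Situation n → List (Call n) → Prop
  | _, [] => True
  | t, r :: ρ => good X t r ∧ allGood X (applyCall r t) ρ

@[simp] lemma allGood_nil (X : Finset (Fin n)) (t : Situation n) : allGood X t [] := trivial

lemma allGood_cons {X : Finset (Fin n)} {t : Situation n} {r : Call n} {ρ : List (Call n)} :
    allGood X t (r :: ρ) ↔ good X t r ∧ allGood X (applyCall r t) ρ := Iff.rfl

lemma allGood_mem {X : Finset (Fin n)} :
    ∀ {U : List (Call n)} {s : Situation n} {u : Call n}, allGood X s U → u ∈ U →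
      ∃ p q, U = p ++ u :: q ∧ good X (applySeq p s) u := by
  intro U
  induction U with
  | nil => intro s u _ h; simp at h
  | cons r U ih =>
      intro s u hg hm
      rcases List.mem_cons.1 hm with rfl | hm
      · exact ⟨[], U, rfl, by simpa using hg.1⟩
      · obtain ⟨p, q, hpq, hgood⟩ := ih hg.2 hm
        exact ⟨r :: p, q, by rw [hpq]; rfl, by simpa using hgood⟩

lemma bad_persist {X : Finset (Fin n)} {t : Situation n} {r : Call n}
    (hb : ¬ good X t r) : ∀ z, involves r z → ¬ (applyCall r t z ⊆ X) := by
  intro z hz hsub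
  rw [applyCall_pos t hz] at hsub
  exact hb ⟨(Finset.subset_union_left).trans hsub, (Finset.subset_union_right).trans hsub⟩

/-- Two states agreeing on all agents of the calls in U behave the same along U. -/
lemma allGood_agree {X : Finset (Fin n)} :
    ∀ {U : List (Call n)} {s s' : Situation n},
      (∀ u ∈ U, ∀ z, involves u z → s z = s' z) →
      allGood X s' U → allGood X s U := by
  intro U
  induction U with
  | nil => intro s s' _ _; trivial
  | cons u U ih =>
      intro s s' hag hg
      have h1 : s (caller u) = s' (caller u) := hag u List.mem_cons_self _ (inv_caller u)
      have h2 : s (callee u) = s' (callee u) := hag u List.mem_cons_self _ (inv_callee u)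
      refine ⟨⟨h1 ▸ hg.1.1, h2 ▸ hg.1.2⟩, ?_⟩
      refine ih ?_ hg.2
      intro u' hu' z hz
      by_cases hinv : involves u z
      · rw [applyCall_pos s hinv, applyCall_pos s' hinv, h1, h2]
      · rw [applyCall_neg s hinv, applyCall_neg s' hinv]
        exact hag u' (List.mem_cons_of_mem u hu') z hz

lemma applyCall_comm {r u : Call n} (t : Situation n)
    (h : ∀ z, involves r z → ¬ involves u z) :
    applyCall u (applyCall r t) = applyCall r (applyCall u t) := by
  have hrc : ¬ involves u (caller r) := h _ (inv_caller r)
  have hrd : ¬ involves u (callee r) := h _ (inv_callee r)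
  have huc : ¬ involves r (caller u) := fun hz => h _ hz (inv_caller u)
  have hud : ¬ involves r (callee u) := fun hz => h _ hz (inv_callee u)
  funext z
  by_cases hu : involves u z
  · have hr : ¬ involves r z := fun hz => h z hz hu
    rw [applyCall_pos _ hu, applyCall_neg _ hr, applyCall_pos _ hu,
      applyCall_neg _ huc, applyCall_neg _ hud]
  · by_cases hr : involves r z
    · rw [applyCall_neg _ hu, applyCall_pos _ hr, applyCall_pos _ hr,
        applyCall_neg _ hrc, applyCall_neg _ hrd]
    · rw [applyCall_neg _ hu, applyCall_neg _ hr, applyCall_neg _ hr, applyCall_neg _ hu]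

/-- Moving a call `r` disjoint from all of `U` from the front to the back. -/
lemma comm_block {r : Call n} :
    ∀ (U : List (Call n)) (t : Situation n),
      (∀ u ∈ U, ∀ z, involves r z → ¬ involves u z) →
      applySeq (U ++ [r]) t = applySeq (r :: U) t ∧
      ∀ z, view t (U ++ [r]) z = view t (r :: U) z := by
  intro U
  induction U with
  | nil => intro t _; exact ⟨rfl, fun z => rfl⟩
  | cons u U ih =>
      intro t hdisj
      have hu : ∀ z, involves r z → ¬ involves u z :=
        fun z hz => hdisj u List.mem_cons_self z hz
      have htail : ∀ u' ∈ U, ∀ z, involves r z → ¬ involves u' z :=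
        fun u' h' z hz => hdisj u' (List.mem_cons_of_mem u h') z hz
      obtain ⟨ihs, ihv⟩ := ih (applyCall u t) htail
      have hcomm := applyCall_comm t hu
      constructor
      · show applySeq (U ++ [r]) (applyCall u t) = _
        rw [ihs]
        show applySeq U (applyCall r (applyCall u t)) = applySeq U (applyCall u (applyCall r t))
        rw [hcomm]
      · intro z
        have hnu1 : ¬ involves u (caller r) := hu _ (inv_caller r)
        have hnu2 : ¬ involves u (callee r) := hu _ (inv_callee r)
        have hnr1 : ¬ involves r (caller u) := fun hq => hu _ hq (inv_caller u)
        have hnr2 : ¬ involves r (callee u) := fun hq => hu _ hq (inv_callee u)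
        have hval_u : involves u z → applyCall u (applyCall r t) z = applyCall u t z := by
          intro hz
          rw [applyCall_pos _ hz, applyCall_pos _ hz, applyCall_neg t hnr1, applyCall_neg t hnr2]
        have hval_r : involves r z → applyCall r (applyCall u t) z = applyCall r t z := by
          intro hz
          rw [applyCall_pos _ hz, applyCall_pos _ hz, applyCall_neg t hnu1, applyCall_neg t hnu2]
        by_cases hzu : involves u z
        · have hzr : ¬ involves r z := fun hq => hu z hq hzu
          calc view t ((u :: U) ++ [r]) z
              = (u, applyCall u t z) :: view (applyCall u t) (U ++ [r]) z := by
                rw [List.cons_append, view_cons_pos _ _ hzu]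
            _ = (u, applyCall u t z) :: view (applyCall r (applyCall u t)) U z := by
                rw [ihv z, view_cons_neg _ _ hzr]
            _ = view t (r :: u :: U) z := by
                rw [view_cons_neg _ _ hzr, view_cons_pos _ _ hzu, hval_u hzu, hcomm]
        · by_cases hzr : involves r z
          · calc view t ((u :: U) ++ [r]) z
                = view (applyCall u t) (U ++ [r]) z := by
                  rw [List.cons_append, view_cons_neg _ _ hzu]
              _ = (r, applyCall r (applyCall u t) z) :: view (applyCall r (applyCall u t)) U z := by
                  rw [ihv z, view_cons_pos _ _ hzr]
              _ = view t (r :: u :: U) z := by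
                  rw [view_cons_pos _ _ hzr, view_cons_neg _ _ hzu, hval_r hzr, hcomm]
          · calc view t ((u :: U) ++ [r]) z
                = view (applyCall u t) (U ++ [r]) z := by
                  rw [List.cons_append, view_cons_neg _ _ hzu]
              _ = view (applyCall r (applyCall u t)) U z := by
                  rw [ihv z, view_cons_neg _ _ hzr]
              _ = view t (r :: u :: U) z := by
                  rw [view_cons_neg _ _ hzr, view_cons_neg _ _ hzu, hcomm]

end Gossip
namespace Gossip

variable {n : ℕ}

/-- Stable partition of a sequence into good ("uninfected") and bad ("infected") calls. -/
def part (X : Finset (Fin n)) : Situation n → List (Call n) → List (Call n) × List (Call n)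
  | _, [] => ([], [])
  | t, r :: δ =>
      if good X t r then ((part X (applyCall r t) δ).1.cons r, (part X (applyCall r t) δ).2)
      else ((part X (applyCall r t) δ).1, (part X (applyCall r t) δ).2.cons r)

lemma part_nil (X : Finset (Fin n)) (t : Situation n) : part X t [] = ([], []) := rfl

lemma part_cons_good {X : Finset (Fin n)} {t : Situation n} {r : Call n} (δ : List (Call n))
    (h : good X t r) :
    part X t (r :: δ)
      = (r :: (part X (applyCall r t) δ).1, (part X (applyCall r t) δ).2) := by
  rw [part, if_pos h]

lemma part_cons_bad {X : Finset (Fin n)} {t : Situation n} {r : Call n} (δ : List (Call n))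
    (h : ¬ good X t r) :
    part X t (r :: δ)
      = ((part X (applyCall r t) δ).1, r :: (part X (applyCall r t) δ).2) := by
  rw [part, if_neg h]

theorem part_spec (X : Finset (Fin n)) :
    ∀ (δ : List (Call n)) (t : Situation n),
      allGood X t (part X t δ).1 ∧
      applySeq ((part X t δ).1 ++ (part X t δ).2) t = applySeq δ t ∧
      ∀ z, view t ((part X t δ).1 ++ (part X t δ).2) z = view t δ z := by
  intro δ
  induction δ with
  | nil => intro t; exact ⟨trivial, rfl, fun z => rfl⟩
  | cons r δ ih =>
      intro t
      set t' := applyCall r t with ht'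
      obtain ⟨ihg, ihs, ihv⟩ := ih t'
      by_cases h : good X t r
      · rw [part_cons_good δ h]
        refine ⟨⟨h, ihg⟩, ?_, ?_⟩
        · show applySeq ((part X t' δ).1 ++ (part X t' δ).2) t' = _
          rw [ihs]; rfl
        · intro z
          by_cases hz : involves r z
          · rw [List.cons_append, view_cons_pos _ _ hz, view_cons_pos _ _ hz, ihv z]
          · rw [List.cons_append, view_cons_neg _ _ hz, view_cons_neg _ _ hz, ihv z]
      · rw [part_cons_bad δ h]
        have hdisj : ∀ u ∈ (part X t' δ).1, ∀ z, involves r z → ¬ involves u z := by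
          intro u hu z hz hinv
          obtain ⟨p, q, hpq, hgood⟩ := allGood_mem ihg hu
          have hmon : t' z ⊆ applySeq p t' z := subset_applySeq p t' z
          have hzsub : applySeq p t' z ⊆ X := by
            rcases hinv with h1 | h1
            · rw [h1]; exact hgood.1
            · rw [h1]; exact hgood.2
          exact bad_persist h z hz (hmon.trans hzsub)
        obtain ⟨hcs, hcv⟩ := comm_block (part X t' δ).1 t hdisj
        refine ⟨?_, ?_, ?_⟩
        · refine allGood_agree ?_ ihg
          intro u hu z hz
          rw [ht', applyCall_neg t (fun hq => hdisj u hu z hq hz)]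
        · show applySeq ((part X t' δ).1 ++ r :: (part X t' δ).2) t = _
          rw [show (part X t' δ).1 ++ r :: (part X t' δ).2
              = ((part X t' δ).1 ++ [r]) ++ (part X t' δ).2 by simp]
          rw [applySeq_append, hcs]
          show applySeq (part X t' δ).2 (applySeq (part X t' δ).1 t') = _
          rw [← applySeq_append, ihs]
          rfl
        · intro z
          show view t ((part X t' δ).1 ++ r :: (part X t' δ).2) z = _
          rw [show (part X t' δ).1 ++ r :: (part X t' δ).2
              = ((part X t' δ).1 ++ [r]) ++ (part X t' δ).2 by simp]
          rw [view_append, hcv z, hcs]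
          by_cases hz : involves r z
          · rw [view_cons_pos _ _ hz, view_cons_pos _ _ hz]
            show _ ++ view (applySeq (part X t' δ).1 t') _ z = _
            rw [List.cons_append, ← view_append, ihv z]
          · rw [view_cons_neg _ _ hz, view_cons_neg _ _ hz]
            show view t' (part X t' δ).1 z ++ view (applySeq (part X t' δ).1 t') _ z = _
            rw [← view_append, ihv z]

theorem part_I_free (X : Finset (Fin n)) :
    ∀ (δ : List (Call n)) (t : Situation n) (z : Fin n),
      (∀ p r q, δ = p ++ r :: q → involves r z → good X (applySeq p t) r) →
      ∀ r' ∈ (part X t δ).2, ¬ involves r' z := by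
  intro δ
  induction δ with
  | nil => intro t z _ r' hr'; rw [part_nil] at hr'; simp at hr'
  | cons r δ ih =>
      intro t z hz r' hr'
      have htail : ∀ p r'' q, δ = p ++ r'' :: q → involves r'' z →
          good X (applySeq p (applyCall r t)) r'' := by
        intro p r'' q hpq hinv
        have := hz (r :: p) r'' q (by rw [hpq]; rfl) hinv
        simpa using this
      by_cases h : good X t r
      · rw [part_cons_good δ h] at hr'
        exact ih (applyCall r t) z htail r' hr'
      · rw [part_cons_bad δ h] at hr'
        rcases List.mem_cons.1 hr' with rfl | hr'
        · intro hinv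
          exact h (hz [] r' δ rfl hinv)
        · exact ih (applyCall r t) z htail r' hr'

end Gossip
namespace Gossip

variable {n : ℕ}

lemma const_of_allGood {X : Finset (Fin n)} {x : Fin n} :
    ∀ (U : List (Call n)) (s : Situation n), s x = X → allGood X s U →
      ∀ p q : List (Call n), U = p ++ q → applySeq p s x = X := by
  intro U
  induction U with
  | nil =>
      intro s hs _ p q hpq
      have : p = [] := List.eq_nil_of_length_eq_zero (by
        have := congrArg List.length hpq; simp at this; omega)
      subst this; simpa using hs
  | cons u U ih =>
      intro s hs hg p q hpq
      rcases p with _ | ⟨u', p'⟩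
      · simpa using hs
      · rw [List.cons_append] at hpq
        injection hpq with h1 hU
        subst h1
        have hnext : applyCall u s x = X := by
          by_cases hx : involves u x
          · refine Finset.Subset.antisymm ?_ ?_
            · rw [applyCall_pos s hx]
              exact Finset.union_subset hg.1.1 hg.1.2
            · rw [← hs]; exact subset_applyCall u s x
          · rw [applyCall_neg s hx]; exact hs
        rw [applySeq_cons]
        exact ih (applyCall u s) hnext hg.2 p' q hU

/-- Decompose a sequence at a distinguished entry of x's view. -/
lemma view_split {x : Fin n} :
    ∀ (σ : List (Call n)) (s : Situation n) (A B : List (Call n × Finset (Fin n)))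
      (c : Call n) (v : Finset (Fin n)),
      view s σ x = A ++ (c, v) :: B →
      ∃ σ₁ σ₂, σ = σ₁ ++ c :: σ₂ ∧ view s σ₁ x = A ∧ involves c x ∧
        applyCall c (applySeq σ₁ s) x = v ∧
        view (applyCall c (applySeq σ₁ s)) σ₂ x = B := by
  intro σ
  induction σ with
  | nil => intro s A B c v h; rw [view_nil] at h; exact absurd h (by simp)
  | cons d σ ih =>
      intro s A B c v h
      by_cases hd : involves d x
      · rw [view_cons_pos _ _ hd] at h
        rcases A with _ | ⟨a, A'⟩
        · rw [List.nil_append] at h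
          injection h with h1 h2
          obtain ⟨rfl, rfl⟩ : d = c ∧ applyCall d s x = v := by
            constructor
            · exact congrArg Prod.fst h1
            · exact congrArg Prod.snd h1
          exact ⟨[], σ, rfl, rfl, hd, by simpa using rfl, by simpa using h2⟩
        · rw [List.cons_append] at h
          injection h with h1 h2
          obtain ⟨σ₁, σ₂, rfl, hA, hc, hv, hB⟩ := ih (applyCall d s) A' B c v h2
          refine ⟨d :: σ₁, σ₂, rfl, ?_, hc, ?_, ?_⟩
          · rw [view_cons_pos _ _ hd, hA, ← h1]
          · rw [applySeq_cons]; exact hv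
          · rw [applySeq_cons]; exact hB
      · rw [view_cons_neg _ _ hd] at h
        obtain ⟨σ₁, σ₂, rfl, hA, hc, hv, hB⟩ := ih (applyCall d s) A B c v h
        refine ⟨d :: σ₁, σ₂, rfl, ?_, hc, ?_, ?_⟩
        · rw [view_cons_neg _ _ hd, hA]
        · rw [applySeq_cons]; exact hv
        · rw [applySeq_cons]; exact hB

/-- Split a sequence at a boundary of x's view. -/
lemma view_split2 {x : Fin n} :
    ∀ (σ : List (Call n)) (s : Situation n) (Q S : List (Call n × Finset (Fin n))),
      view s σ x = Q ++ S →
      ∃ δA δB, σ = δA ++ δB ∧ view s δA x = Q ∧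
        view (applySeq δA s) δB x = S := by
  intro σ
  induction σ with
  | nil =>
      intro s Q S h
      rw [view_nil] at h
      obtain ⟨h1, h2⟩ := List.append_eq_nil_iff.1 h.symm
      exact ⟨[], [], rfl, by rw [h1]; rfl, by rw [h2]; rfl⟩
  | cons d σ ih =>
      intro s Q S h
      by_cases hd : involves d x
      · rw [view_cons_pos _ _ hd] at h
        rcases Q with _ | ⟨e, Q'⟩
        · exact ⟨[], d :: σ, rfl, rfl, by
            rw [List.nil_append] at h
            rw [applySeq_nil, view_cons_pos _ _ hd, h]⟩
        · rw [List.cons_append] at h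
          injection h with h1 h2
          obtain ⟨δA, δB, rfl, hQ, hS⟩ := ih (applyCall d s) Q' S h2
          refine ⟨d :: δA, δB, rfl, ?_, ?_⟩
          · rw [view_cons_pos _ _ hd, hQ, ← h1]
          · rw [applySeq_cons]; exact hS
      · rw [view_cons_neg _ _ hd] at h
        obtain ⟨δA, δB, rfl, hQ, hS⟩ := ih (applyCall d s) Q S h
        refine ⟨d :: δA, δB, rfl, ?_, ?_⟩
        · rw [view_cons_neg _ _ hd, hQ]
        · rw [applySeq_cons]; exact hS

end Gossip
namespace Gossip

variable {n : ℕ}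

lemma seq_mid (α₁ γ : List (Call n)) (c : Call n) (s : Situation n) :
    applySeq (α₁ ++ c :: γ) s = applySeq γ (applyCall c (applySeq α₁ s)) := by
  rw [applySeq_append]; rfl

lemma view_mid_pos {c : Call n} {x : Fin n} (α₁ γ : List (Call n)) (s : Situation n)
    (h : involves c x) :
    view s (α₁ ++ c :: γ) x = view s α₁ x ++
      (c, applyCall c (applySeq α₁ s) x) :: view (applyCall c (applySeq α₁ s)) γ x := by
  rw [view_append, view_cons_pos _ _ h]

lemma view_mid_neg {c : Call n} {x : Fin n} (α₁ γ : List (Call n)) (s : Situation n)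
    (h : ¬ involves c x) :
    view s (α₁ ++ c :: γ) x
      = view s α₁ x ++ view (applyCall c (applySeq α₁ s)) γ x := by
  rw [view_append, view_cons_neg _ _ h]

/-- The key technical lemma: a copy of `c` may be inserted after a stretch `α₂`
during which both participants of `c` hold exactly what they held right after `c`. -/
theorem stutter_main :
    ∀ (φ : Form n) (α₁ α₂ β : List (Call n)) (c : Call n),
      (∀ p q : List (Call n), α₂ = p ++ q →
        applySeq p (applyCall c (applySeq α₁ root)) (caller c)
          = applyCall c (applySeq α₁ root) (caller c) ∧
        applySeq p (applyCall c (applySeq α₁ root)) (callee c)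
          = applyCall c (applySeq α₁ root) (callee c)) →
      (sat (α₁ ++ c :: (α₂ ++ β)) φ ↔ sat (α₁ ++ c :: (α₂ ++ c :: β)) φ) := by
  intro φ
  induction φ with
  | F a S =>
      intro α₁ α₂ β c hC2
      have hnoop : applyCall c (applySeq α₂ (applyCall c (applySeq α₁ root)))
          = applySeq α₂ (applyCall c (applySeq α₁ root)) := by
        refine applyCall_noop ?_
        rw [(hC2 α₂ [] (by simp)).1, (hC2 α₂ [] (by simp)).2, applyCall_merge]
      show S ∈ applySeq _ root a ↔ S ∈ applySeq _ root a
      rw [seq_mid, seq_mid, applySeq_append, applySeq_append, applySeq_cons, hnoop]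
  | neg φ ih =>
      intro α₁ α₂ β c hC2
      exact not_congr (ih α₁ α₂ β c hC2)
  | and φ ψ ihφ ihψ =>
      intro α₁ α₂ β c hC2
      exact and_congr (ihφ α₁ α₂ β c hC2) (ihψ α₁ α₂ β c hC2)
  | K x φ ih =>
      intro α₁ α₂ β c hC2
      set A := applySeq α₁ root with hA
      set T₀ := applyCall c A with hT₀
      set T₁ := applySeq α₂ T₀ with hT₁
      have hmerge : T₀ (caller c) = T₀ (callee c) := applyCall_merge c A
      have hend : T₁ (caller c) = T₀ (caller c) ∧ T₁ (callee c) = T₀ (callee c) :=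
        hC2 α₂ [] (by simp)
      have hnoop : applyCall c T₁ = T₁ := by
        refine applyCall_noop ?_
        rw [hend.1, hend.2, hmerge]
      by_cases hx : involves c x
      · -- x is a participant of c
        set X := T₀ (caller c) with hX
        have hT₀x : T₀ x = X := by
          rcases hx with h | h
          · rw [h]
          · rw [h, ← hmerge]
        have hQX : ∀ e ∈ view T₀ α₂ x, e.2 = X := by
          refine values_of_const α₂ T₀ ?_
          intro p q hpq
          rcases hx with h | h
          · rw [h]; rw [(hC2 p q hpq).1]
          · rw [h]; rw [(hC2 p q hpq).2, ← hmerge]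
        have viewL : view root (α₁ ++ c :: (α₂ ++ β)) x
            = view root α₁ x ++ (c, X) :: (view T₀ α₂ x ++ view T₁ β x) := by
          rw [view_mid_pos _ _ _ hx, view_append, ← hA, ← hT₀, ← hT₁, hT₀x]
        have viewR : view root (α₁ ++ c :: (α₂ ++ c :: β)) x
            = view root α₁ x ++ (c, X) :: (view T₀ α₂ x ++ (c, X) :: view T₁ β x) := by
          have hT₁x : T₁ x = X := by
            rcases hx with h | h
            · rw [h, hend.1]
            · rw [h, hend.2, ← hmerge]
          rw [view_mid_pos _ _ _ hx, view_append, ← hA, ← hT₀, ← hT₁, hT₀x,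
            view_cons_pos _ _ hx, hnoop, hT₁x]
        rw [sat_K_iff, sat_K_iff]
        simp only [viewL, viewR]
        constructor
        · -- deletion direction
          intro hL τ' hτ'
          have hτ'' : view root τ' x
              = (view root α₁ x ++ (c, X) :: view T₀ α₂ x) ++ (c, X) :: view T₁ β x := by
            rw [hτ']; simp
          obtain ⟨ρ, κ, rfl, hρv, hcx', hval2, hκ⟩ := view_split τ' root _ _ c X hτ''
          obtain ⟨ρ₁, ρ₂, rfl, hρ₁, _, hval1, hρ₂⟩ := view_split ρ root _ _ c X hρv
          set t := applyCall c (applySeq ρ₁ root) with hts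
          have hseqρ : applySeq (ρ₁ ++ c :: ρ₂) root = applySeq ρ₂ t := seq_mid _ _ _ _
          have htm : t (caller c) = t (callee c) := applyCall_merge _ _
          have htc : t (caller c) = X ∧ t (callee c) = X := by
            rcases hx with h | h
            · exact ⟨h ▸ hval1, htm ▸ h ▸ hval1⟩
            · exact ⟨htm.symm ▸ h ▸ hval1, h ▸ hval1⟩
          have hub : applySeq ρ₂ t (caller c) ⊆ X ∧ applySeq ρ₂ t (callee c) ⊆ X := by
            have hXv : applyCall c (applySeq ρ₂ t) x = X := by
              rw [← hseqρ]; exact hval2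
            rw [applyCall_pos _ hx] at hXv
            exact ⟨hXv ▸ Finset.subset_union_left, hXv ▸ Finset.subset_union_right⟩
          have hconst1 := const_of_ub htc.1 hub.1
          have hconst2 := const_of_ub htc.2 hub.2
          have hC2' : ∀ p q : List (Call n), ρ₂ = p ++ q →
              applySeq p t (caller c) = t (caller c) ∧
              applySeq p t (callee c) = t (callee c) := by
            intro p q hpq
            rw [htc.1, htc.2]
            exact ⟨hconst1 p q hpq, hconst2 p q hpq⟩
          have hIH := ih ρ₁ ρ₂ κ c hC2'
          have hnoop' : applyCall c (applySeq ρ₂ t) = applySeq ρ₂ t := by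
            refine applyCall_noop ?_
            rw [hconst1 ρ₂ [] (by simp), hconst2 ρ₂ [] (by simp)]
          have hv₀ : view root (ρ₁ ++ c :: (ρ₂ ++ κ)) x
              = view root α₁ x ++ (c, X) :: (view T₀ α₂ x ++ view T₁ β x) := by
            rw [view_mid_pos _ _ _ hx, hρ₁, view_append, ← hts, hval1, hρ₂]
            have hκ' : view (applySeq ρ₂ t) κ x = view T₁ β x := by
              rw [← hnoop']
              rw [← hseqρ]
              exact hκ
            rw [hκ']
          have hsat₀ : sat (ρ₁ ++ c :: (ρ₂ ++ κ)) φ := hL _ hv₀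
          have hlist : (ρ₁ ++ c :: ρ₂) ++ c :: κ = ρ₁ ++ c :: (ρ₂ ++ c :: κ) := by simp
          rw [hlist]
          exact hIH.1 hsat₀
        · -- insertion direction
          intro hR τ hτ
          obtain ⟨ρ₁, δ, rfl, hρ₁, _, hval1, hδ⟩ := view_split τ root _ _ c X hτ
          set t := applyCall c (applySeq ρ₁ root) with hts
          obtain ⟨δA, δB, rfl, hA', hB⟩ := view_split2 δ t _ _ hδ
          have htm : t (caller c) = t (callee c) := applyCall_merge _ _
          have htc : t (caller c) = X ∧ t (callee c) = X := by
            rcases hx with h | h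
            · exact ⟨h ▸ hval1, htm ▸ h ▸ hval1⟩
            · exact ⟨htm.symm ▸ h ▸ hval1, h ▸ hval1⟩
          obtain ⟨hg, hs, hv⟩ := part_spec X δA t
          have hQX' : ∀ e ∈ view t δA x, e.2 = X := by
            rw [hA']; exact hQX
          have hIfree : ∀ r' ∈ (part X t δA).2, ¬ involves r' x := by
            refine part_I_free X δA t x ?_
            intro p r q hpq hinv
            have hmem : (r, applyCall r (applySeq p t) x) ∈ view t δA x := by
              rw [hpq, view_append, view_cons_pos _ _ hinv]
              simp
            have hXv := hQX' _ hmem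
            rw [applyCall_pos _ hinv] at hXv
            exact ⟨hXv ▸ Finset.subset_union_left, hXv ▸ Finset.subset_union_right⟩
          have hcU1 := const_of_allGood (part X t δA).1 t htc.1 hg
          have hcU2 := const_of_allGood (part X t δA).1 t htc.2 hg
          have hVeq : ∀ z, view root (ρ₁ ++ c :: (δA ++ δB)) z
              = view root (ρ₁ ++ c :: (((part X t δA).1 ++ (part X t δA).2) ++ δB)) z := by
            intro z
            by_cases hz : involves c z
            · rw [view_mid_pos _ _ _ hz, view_mid_pos _ _ _ hz, ← hts,
                view_append, view_append, hv z, hs]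
            · rw [view_mid_neg _ _ _ hz, view_mid_neg _ _ _ hz, ← hts,
                view_append, view_append, hv z, hs]
          have hVs := sat_congr_view hVeq φ
          have hC2'' : ∀ p q : List (Call n), (part X t δA).1 = p ++ q →
              applySeq p t (caller c) = t (caller c) ∧
              applySeq p t (callee c) = t (callee c) := by
            intro p q hpq
            rw [htc.1, htc.2]
            exact ⟨hcU1 p q hpq, hcU2 p q hpq⟩
          have hIH := ih ρ₁ (part X t δA).1 ((part X t δA).2 ++ δB) c hC2''
          have hUend1 : applySeq (part X t δA).1 t (caller c) = X := hcU1 _ [] (by simp)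
          have hUend2 : applySeq (part X t δA).1 t (callee c) = X := hcU2 _ [] (by simp)
          have hnoopU : applyCall c (applySeq (part X t δA).1 t)
              = applySeq (part X t δA).1 t := by
            refine applyCall_noop ?_
            rw [hUend1, hUend2]
          have hUx : view t (part X t δA).1 x = view T₀ α₂ x := by
            have h1 := hv x
            rw [view_append, view_eq_nil_of_not_involves hIfree, List.append_nil] at h1
            rw [h1, hA']
          have hτ'view : view root (ρ₁ ++ c :: ((part X t δA).1 ++ c :: ((part X t δA).2 ++ δB))) x
              = view root α₁ x ++ (c, X) :: (view T₀ α₂ x ++ (c, X) :: view T₁ β x) := by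
            rw [view_mid_pos _ _ _ hx, hρ₁, ← hts, hval1, view_append, hUx,
              view_cons_pos _ _ hx]
            have hval3 : applyCall c (applySeq (part X t δA).1 t) x = X := by
              rw [applyCall_pos _ hx, hUend1, hUend2, Finset.union_self]
            rw [hval3, hnoopU, view_append, view_eq_nil_of_not_involves hIfree,
              List.nil_append]
            have hstate : applySeq (part X t δA).2 (applySeq (part X t δA).1 t)
                = applySeq δA t := by
              rw [← applySeq_append, hs]
            rw [hstate, hB]
          have hsatτ' := hR _ hτ'view
          have hlist : (part X t δA).1 ++ ((part X t δA).2 ++ δB)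
              = ((part X t δA).1 ++ (part X t δA).2) ++ δB := by simp
          rw [hlist] at hIH
          exact hVs.mpr (hIH.mpr hsatτ')

      · -- x is not a participant: the views coincide
        have hview : view root (α₁ ++ c :: (α₂ ++ β)) x
            = view root (α₁ ++ c :: (α₂ ++ c :: β)) x := by
          rw [view_mid_neg _ _ _ hx, view_mid_neg _ _ _ hx, view_append, view_append,
            ← hA, ← hT₀, ← hT₁, view_cons_neg _ _ hx, hnoop]
        rw [sat_K_iff, sat_K_iff, hview]

end Gossip
/-- the Stuttering Lemma for the full epistemic language. -/
theorem stuttering_lemma {n : ℕ} (hn : 3 ≤ n)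
    (σ₁ σ₂ : List (Call n)) (c : Call n) (φ : Form n) :
    sat (σ₁ ++ [c] ++ σ₂) φ ↔ sat (σ₁ ++ [c] ++ [c] ++ σ₂) φ := by
  have h := stutter_main φ σ₁ [] σ₂ c (by
    intro p q hpq
    have hp : p = [] := List.eq_nil_of_length_eq_zero (by
      have := congrArg List.length hpq; simp at this; omega)
    subst hp
    exact ⟨rfl, rfl⟩)
  simpa using h
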